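/- Let P^ℕ denote the product probability measure on the sequence space X^ℕ, so that the coordinate maps ω ↦ ω_i are i.i.d. with law P, and write E[·] for the integral with respect to P^ℕ. Assume s > 0. Fix β > 1/(c·μ) and ξ > 0 such that the diminishing stepsizes η_i := β/(ξ + i) satisfy η₁ = β/(ξ + 1) ≤ μ/(K·(M_V·(1 + s) + μ_G²)). Fix θ₁ ∈ E and define the iterates θ₁(ω) = θ₁ and θ_{i+1}(ω) = θ_i(ω) − η_i·g(ω_i, θ_i(ω)) for i ≥ 1, and assume that for every i the maps ω ↦ L(θ_i(ω)) and ω ↦ ‖g(ω_i, θ_i(ω))‖² are integrable with respect to P^ℕ. Set κ := max{ β²·K·C_V/(2·(β·c·μ − 1)), (ξ + 1)·L(θ₁)/s }. Then E[L(θ_i)] ≤ κ·s/(ξ + i) for every i ≥ 1. -/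

import Mathlib

open MeasureTheory ProbabilityTheory Filter
open scoped RealInnerProductSpace Gradient

lemma sgd_descent_lemma {E : Type*} [NormedAddCommGroup E] [InnerProductSpace ℝ E] [CompleteSpace E]
    (L : E → ℝ) (hLdiff : Differentiable ℝ L) (K : ℝ) (hK : 0 ≤ K)
    (hLip : ∀ a b : E, ‖∇ L a - ∇ L b‖ ≤ K * ‖a - b‖) (x y : E) :
    L y ≤ L x + ⟪∇ L x, y - x⟫ + K / 2 * ‖y - x‖ ^ 2 := by
  set v := y - x with hv
  have hgradcont : Continuous (∇ L) := by
    have : LipschitzWith (Real.toNNReal K) (∇ L) := by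
      apply LipschitzWith.of_dist_le_mul
      intro a b
      simpa [dist_eq_norm, Real.coe_toNNReal K hK] using hLip a b
    exact this.continuous
  have hline : ∀ t : ℝ, HasDerivAt (fun t : ℝ => L (x + t • v)) ⟪∇ L (x + t • v), v⟫ t := by
    intro t
    have h1 : HasFDerivAt L (InnerProductSpace.toDual ℝ E (∇ L (x + t • v))) (x + t • v) :=
      ((hLdiff (x + t • v)).hasGradientAt).hasFDerivAt
    have h2 : HasDerivAt (fun t : ℝ => x + t • v) v t := by
      simpa using ((hasDerivAt_id t).smul_const v).const_add x
    simpa [Function.comp_def] using h1.comp_hasDerivAt t h2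
  have hcont : Continuous fun t : ℝ => ⟪∇ L (x + t • v), v⟫ := by
    exact (hgradcont.comp (by continuity)).inner continuous_const
  have hftc : ∫ t in (0:ℝ)..1, ⟪∇ L (x + t • v), v⟫ = L y - L x := by
    have := intervalIntegral.integral_eq_sub_of_hasDerivAt
      (f := fun t : ℝ => L (x + t • v)) (f' := fun t => ⟪∇ L (x + t • v), v⟫)
      (a := (0:ℝ)) (b := 1) (fun t _ => hline t) (hcont.intervalIntegrable 0 1)
    simpa [hv] using this
  have hbound : ∫ t in (0:ℝ)..1, ⟪∇ L (x + t • v), v⟫ ≤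
      ∫ t in (0:ℝ)..1, (⟪∇ L x, v⟫ + K * t * ‖v‖ ^ 2) := by
    apply intervalIntegral.integral_mono_on (by norm_num)
      (hcont.intervalIntegrable 0 1) ((by continuity : Continuous fun t : ℝ => ⟪∇ L x, v⟫ + K * t * ‖v‖ ^ 2).intervalIntegrable 0 1)
    intro t ht
    have ht0 : 0 ≤ t := ht.1
    have h1 : ⟪∇ L (x + t • v) - ∇ L x, v⟫ ≤ K * t * ‖v‖ ^ 2 := by
      calc ⟪∇ L (x + t • v) - ∇ L x, v⟫ ≤ ‖∇ L (x + t • v) - ∇ L x‖ * ‖v‖ :=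
            real_inner_le_norm _ _
        _ ≤ (K * ‖(x + t • v) - x‖) * ‖v‖ := by
            gcongr; exact hLip _ _
        _ = K * t * ‖v‖ ^ 2 := by
            simp [norm_smul, abs_of_nonneg ht0]; ring
    have h2 : ⟪∇ L (x + t • v), v⟫ = ⟪∇ L x, v⟫ + ⟪∇ L (x + t • v) - ∇ L x, v⟫ := by
      rw [inner_sub_left]; ring
    linarith
  have hval : ∫ t in (0:ℝ)..1, (⟪∇ L x, v⟫ + K * t * ‖v‖ ^ 2) =
      ⟪∇ L x, v⟫ + K / 2 * ‖v‖ ^ 2 := by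
    have h1 : (fun t : ℝ => ⟪∇ L x, v⟫ + K * t * ‖v‖ ^ 2)
        = fun t : ℝ => ⟪∇ L x, v⟫ + (K * ‖v‖ ^ 2) * t := by funext t; ring
    rw [h1, intervalIntegral.integral_add (continuous_const.intervalIntegrable 0 1)
      ((by fun_prop : Continuous fun t : ℝ => K * ‖v‖ ^ 2 * t).intervalIntegrable 0 1)]
    have h2 : ∫ t in (0:ℝ)..1, K * ‖v‖ ^ 2 * t = K * ‖v‖ ^ 2 * (1 / 2) := by
      rw [intervalIntegral.integral_const_mul]
      have : ∫ t in (0:ℝ)..1, t = ((1:ℝ)^2 - 0^2)/2 := integral_id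
      rw [this]; norm_num
    rw [h2]
    simp
    ring
  rw [hftc] at hbound
  rw [hval] at hbound
  linarith


lemma sgd_step_bound {E : Type*} [NormedAddCommGroup E] [InnerProductSpace ℝ E]
    [CompleteSpace E]
    (L : E → ℝ) (hL0 : ∀ θ : E, 0 ≤ L θ) (hLdiff : Differentiable ℝ L)
    (K : ℝ) (hK : 0 < K)
    (hLip : ∀ θ₁ θ₂ : E, ‖∇ L θ₁ - ∇ L θ₂‖ ≤ K * ‖θ₁ - θ₂‖)
    (c : ℝ) (hc : 0 < c) (hPL : ∀ θ : E, 2 * c * L θ ≤ ‖∇ L θ‖ ^ 2)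
    {X : Type*} [MeasurableSpace X] (P : Measure X) [IsProbabilityMeasure P]
    (g : X × E → E)
    (hgInt : ∀ θ : E, Integrable (fun x => g (x, θ)) P)
    (hgSqInt : ∀ θ : E, Integrable (fun x => ‖g (x, θ)‖ ^ 2) P)
    (mu muG C_V M_V s : ℝ) (hmu : 0 < mu) (hmuG : 0 < muG)
    (hCV : 0 ≤ C_V) (hMV : 0 ≤ M_V) (hs : 0 ≤ s)
    (hmom1 : ∀ θ : E, mu * ‖∇ L θ‖ ^ 2 ≤ ⟪∇ L θ, ∫ x, g (x, θ) ∂P⟫)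
    (hmom2 : ∀ θ : E, ‖∫ x, g (x, θ) ∂P‖ ≤ muG * ‖∇ L θ‖)
    (hvar : ∀ θ : E, ∫ x, ‖g (x, θ)‖ ^ 2 ∂P - ‖∫ x, g (x, θ) ∂P‖ ^ 2
        ≤ C_V * s + M_V * (1 + s) * ‖∇ L θ‖ ^ 2)
    (η : ℝ) (hη : 0 < η) (hηD : η * (K * (M_V * (1 + s) + muG ^ 2)) ≤ mu) (θ : E) :
    ∫ x, L (θ - η • g (x, θ)) ∂P
      ≤ (1 - η * (c * mu)) * L θ + η ^ 2 * K * C_V * s / 2 := by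
  set B := ∫ x, g (x, θ) ∂P with hB
  set G2 := ∫ x, ‖g (x, θ)‖ ^ 2 ∂P with hG2
  have hpt : ∀ x : X, L (θ - η • g (x, θ)) ≤
      L θ + (- η) * ⟪∇ L θ, g (x, θ)⟫ + (K / 2 * η ^ 2) * ‖g (x, θ)‖ ^ 2 := by
    intro x
    have := sgd_descent_lemma L hLdiff K hK.le hLip θ (θ - η • g (x, θ))
    have h1 : θ - η • g (x, θ) - θ = -(η • g (x, θ)) := by abel
    rw [h1] at this
    calc L (θ - η • g (x, θ)) ≤ L θ + ⟪∇ L θ, -(η • g (x, θ))⟫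
          + K / 2 * ‖-(η • g (x, θ))‖ ^ 2 := this
      _ = L θ + (- η) * ⟪∇ L θ, g (x, θ)⟫ + (K / 2 * η ^ 2) * ‖g (x, θ)‖ ^ 2 := by
          rw [inner_neg_right, real_inner_smul_right, norm_neg, norm_smul]
          simp [abs_of_nonneg hη.le]
          ring
  have hRint : Integrable (fun x => L θ + (- η) * ⟪∇ L θ, g (x, θ)⟫
      + (K / 2 * η ^ 2) * ‖g (x, θ)‖ ^ 2) P :=
    ((integrable_const _).add (((hgInt θ).const_inner _).const_mul _)).add
      ((hgSqInt θ).const_mul _)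
  have hmono : ∫ x, L (θ - η • g (x, θ)) ∂P ≤ ∫ x, (L θ + (- η) * ⟪∇ L θ, g (x, θ)⟫
      + (K / 2 * η ^ 2) * ‖g (x, θ)‖ ^ 2) ∂P :=
    integral_mono_of_nonneg (Filter.Eventually.of_forall fun x => hL0 _) hRint
      (Filter.Eventually.of_forall hpt)
  have h1 : Integrable (fun x => (- η) * ⟪∇ L θ, g (x, θ)⟫) P :=
    ((hgInt θ).const_inner _).const_mul _
  have h2 : Integrable (fun x => (K / 2 * η ^ 2) * ‖g (x, θ)‖ ^ 2) P :=
    (hgSqInt θ).const_mul _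
  have h0 : Integrable (fun x => L θ + (- η) * ⟪∇ L θ, g (x, θ)⟫) P :=
    (integrable_const _).add h1
  have hRval : ∫ x, (L θ + (- η) * ⟪∇ L θ, g (x, θ)⟫
      + (K / 2 * η ^ 2) * ‖g (x, θ)‖ ^ 2) ∂P
      = L θ + (- η) * ⟪∇ L θ, B⟫ + (K / 2 * η ^ 2) * G2 := by
    rw [integral_add h0 h2, integral_add (integrable_const _) h1,
      integral_const, integral_const_mul, integral_const_mul, integral_inner (hgInt θ)]
    simp [hB, hG2]
  rw [hRval] at hmono
  -- numeric part
  have hBsq : ‖B‖ ^ 2 ≤ muG ^ 2 * ‖∇ L θ‖ ^ 2 := by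
    have := hmom2 θ
    nlinarith [norm_nonneg B, norm_nonneg (∇ L θ)]
  have hG2le : G2 ≤ C_V * s + (M_V * (1 + s) + muG ^ 2) * ‖∇ L θ‖ ^ 2 := by
    have := hvar θ
    nlinarith
  have hinner := hmom1 θ
  have hPLθ := hPL θ
  have hcoef : K / 2 * η ^ 2 * (M_V * (1 + s) + muG ^ 2) ≤ η * mu / 2 := by
    nlinarith [hη.le]
  have hn : (0:ℝ) ≤ ‖∇ L θ‖ ^ 2 := sq_nonneg _
  have hKη : (0:ℝ) ≤ K / 2 * η ^ 2 := by positivity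
  have e2 : (K / 2 * η ^ 2) * G2 ≤ (K / 2 * η ^ 2) * (C_V * s
      + (M_V * (1 + s) + muG ^ 2) * ‖∇ L θ‖ ^ 2) :=
    mul_le_mul_of_nonneg_left hG2le hKη
  have e4 : K / 2 * η ^ 2 * (M_V * (1 + s) + muG ^ 2) * ‖∇ L θ‖ ^ 2
      ≤ η * mu / 2 * ‖∇ L θ‖ ^ 2 := mul_le_mul_of_nonneg_right hcoef hn
  have e5 : η * mu / 2 * (2 * c * L θ) ≤ η * mu / 2 * ‖∇ L θ‖ ^ 2 :=
    mul_le_mul_of_nonneg_left hPLθ (by positivity)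
  have e3 : (-η) * ⟪∇ L θ, B⟫ ≤ (-η) * (mu * ‖∇ L θ‖ ^ 2) := by
    have := mul_le_mul_of_nonneg_left hinner hη.le
    linarith
  calc ∫ x, L (θ - η • g (x, θ)) ∂P ≤ L θ + (- η) * ⟪∇ L θ, B⟫ + (K / 2 * η ^ 2) * G2 :=
        hmono
    _ ≤ (1 - η * (c * mu)) * L θ + η ^ 2 * K * C_V * s / 2 := by nlinarith

lemma sgd_frac_arith (b cm K C_V κ s t : ℝ) (hs : 0 < s) (hκ0 : 0 ≤ κ)
    (ht : 1 < t) (hcoef : 0 ≤ 1 - b / t * cm)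
    (hQ2 : b ^ 2 * K * C_V / 2 ≤ κ * (b * cm - 1)) :
    (1 - b / t * cm) * (κ * s / t) + (b / t) ^ 2 * K * C_V * s / 2 ≤ κ * s / (t + 1) := by
  have ht0 : 0 < t := by linarith
  have hLHS : (1 - b / t * cm) * (κ * s / t) + (b / t) ^ 2 * K * C_V * s / 2
      = ((t - b * cm) * (κ * s) + b ^ 2 * K * C_V * s / 2) / t ^ 2 := by
    field_simp
  rw [hLHS, div_le_div_iff₀ (by positivity) (by linarith)]
  nlinarith [mul_nonneg (mul_nonneg (sub_nonneg.mpr hQ2) (by linarith : (0:ℝ) ≤ t - 1)) hs.le,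
    mul_nonneg (mul_nonneg hκ0 hs.le) (by linarith : (0:ℝ) ≤ t - 1),
    mul_nonneg hκ0 hs.le]

theorem sgd_diminishing_step_convergence
    -- Parameter space: finite-dimensional real inner product space
    {E : Type*} [NormedAddCommGroup E] [InnerProductSpace ℝ E] [FiniteDimensional ℝ E] [MeasurableSpace E] [BorelSpace E]
    -- Loss function: nonnegative, differentiable, Lipschitz gradient, 2c-PL* condition
    (L : E → ℝ) (hL0 : ∀ θ : E, 0 ≤ L θ) (hLdiff : Differentiable ℝ L)
    (K : ℝ) (hK : 0 < K)
    (hLip : ∀ θ₁ θ₂ : E, ‖∇ L θ₁ - ∇ L θ₂‖ ≤ K * ‖θ₁ - θ₂‖)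
    (c : ℝ) (hc : 0 < c) (hPL : ∀ θ : E, 2 * c * L θ ≤ ‖∇ L θ‖ ^ 2)
    -- Stochastic gradient on a probability space
    {X : Type*} [MeasurableSpace X] (P : Measure X) [IsProbabilityMeasure P]
    (g : X × E → E) (hgmeas : Measurable g)
    (hgInt : ∀ θ : E, Integrable (fun x => g (x, θ)) P)
    (hgSqInt : ∀ θ : E, Integrable (fun x => ‖g (x, θ)‖ ^ 2) P)
    -- constants
    (mu muG C_V M_V s : ℝ) (hmu : 0 < mu) (hmuG : 0 < muG)
    (hmu_le : mu ≤ Real.sqrt (K / c) * muG)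
    (hCV : 0 ≤ C_V) (hMV : 0 ≤ M_V) (hs : 0 ≤ s)
    -- moment assumptions (i), (ii), (iii)
    (hmom1 : ∀ θ : E, mu * ‖∇ L θ‖ ^ 2 ≤ ⟪∇ L θ, ∫ x, g (x, θ) ∂P⟫)
    (hmom2 : ∀ θ : E, ‖∫ x, g (x, θ) ∂P‖ ≤ muG * ‖∇ L θ‖)
    (hvar : ∀ θ : E, ∫ x, ‖g (x, θ)‖ ^ 2 ∂P - ‖∫ x, g (x, θ) ∂P‖ ^ 2
        ≤ C_V * s + M_V * (1 + s) * ‖∇ L θ‖ ^ 2)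
    -- product measure on the sequence space with i.i.d. coordinates of law P
    (Pseq : Measure (ℕ → X)) [IsProbabilityMeasure Pseq]
    (hmap : ∀ i : ℕ, Pseq.map (fun ω => ω i) = P)
    (hiid : iIndepFun
      (fun (i : ℕ) (ω : ℕ → X) => ω i) Pseq)
    -- positive quadrature error
    (hs' : 0 < s)
    -- diminishing stepsizes η_i = β / (ξ + i)
    (β ξ : ℝ) (hβ : 1 / (c * mu) < β) (hξ : 0 < ξ)
    (hη1 : β / (ξ + 1) ≤ mu / (K * (M_V * (1 + s) + muG ^ 2)))
    -- SGD iterates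
    (θ₁ : E) (θiter : (ℕ → X) → ℕ → E)
    (hiter1 : ∀ ω : ℕ → X, θiter ω 1 = θ₁)
    (hiter : ∀ ω : ℕ → X, ∀ i ≥ 1,
      θiter ω (i + 1) = θiter ω i - (β / (ξ + (i : ℝ))) • g (ω i, θiter ω i))
    -- integrability of the relevant functionals along the iterates
    (hLint : ∀ i : ℕ, Integrable (fun ω => L (θiter ω i)) Pseq)
    (hgiter : ∀ i : ℕ, Integrable (fun ω => ‖g (ω i, θiter ω i)‖ ^ 2) Pseq) :
    ∀ i ≥ 1, ∫ ω, L (θiter ω i) ∂Pseq ≤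
      max (β ^ 2 * K * C_V / (2 * (β * c * mu - 1))) ((ξ + 1) * L θ₁ / s) * s
        / (ξ + (i : ℝ)) := by
  have hcmu : 0 < c * mu := mul_pos hc hmu
  have hβpos : 0 < β := lt_trans (by positivity) hβ
  have hDpos : 0 < K * (M_V * (1 + s) + muG ^ 2) := by
    have h1 : 0 ≤ M_V * (1 + s) := mul_nonneg hMV (by linarith)
    have h2 : 0 < muG ^ 2 := pow_pos hmuG 2
    exact mul_pos hK (by linarith)
  have hβcm : 1 < β * (c * mu) := by
    have := (div_lt_iff₀ hcmu).mp hβ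
    linarith
  -- stepsize facts
  have hηpos : ∀ i : ℕ, 1 ≤ i → 0 < β / (ξ + (i : ℝ)) := by
    intro i hi
    have : (1:ℝ) ≤ (i:ℝ) := by exact_mod_cast hi
    positivity
  have hηle : ∀ i : ℕ, 1 ≤ i →
      β / (ξ + (i : ℝ)) * (K * (M_V * (1 + s) + muG ^ 2)) ≤ mu := by
    intro i hi
    have hi1 : (1:ℝ) ≤ (i:ℝ) := by exact_mod_cast hi
    have h1 : β / (ξ + (i:ℝ)) ≤ β / (ξ + 1) := by
      apply div_le_div_of_nonneg_left hβpos.le (by linarith) (by linarith)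
    have h2 : β / (ξ + (i:ℝ)) ≤ mu / (K * (M_V * (1 + s) + muG ^ 2)) := le_trans h1 hη1
    calc β / (ξ + (i:ℝ)) * (K * (M_V * (1 + s) + muG ^ 2))
        ≤ mu / (K * (M_V * (1 + s) + muG ^ 2)) * (K * (M_V * (1 + s) + muG ^ 2)) :=
          mul_le_mul_of_nonneg_right h2 hDpos.le
      _ = mu := div_mul_cancel₀ mu hDpos.ne'
  have hmusq : c * mu ^ 2 ≤ K * muG ^ 2 := by
    have hKc : (0:ℝ) ≤ K / c := (div_pos hK hc).le
    have h2 : mu ^ 2 ≤ (K / c) * muG ^ 2 := by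
      have hsq := Real.sq_sqrt hKc
      nlinarith [Real.sqrt_nonneg (K / c), hmu.le, hmuG.le]
    have := mul_le_mul_of_nonneg_left h2 hc.le
    calc c * mu ^ 2 ≤ c * ((K / c) * muG ^ 2) := this
      _ = K * muG ^ 2 := by field_simp
  have hηc1 : ∀ i : ℕ, 1 ≤ i → β / (ξ + (i : ℝ)) * (c * mu) ≤ 1 := by
    intro i hi
    have h1 := hηle i hi
    have h2 := hηpos i hi
    have hD2 : c * mu ^ 2 ≤ K * (M_V * (1 + s) + muG ^ 2) := by
      have h3 : 0 ≤ K * (M_V * (1 + s)) := mul_nonneg hK.le (mul_nonneg hMV (by linarith))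
      nlinarith
    nlinarith [mul_le_mul_of_nonneg_left h1 (mul_pos hc hmu).le, h2.le]
  -- factorization of the iterates through finitely many coordinates
  have hfac : ∀ i : ℕ, 1 ≤ i → ∃ F : ({j // j ∈ Finset.Ico 1 i} → X) → E,
      Measurable F ∧ ∀ ω : ℕ → X, θiter ω i = F (fun j => ω j.1) := by
    intro i hi
    induction i, hi using Nat.le_induction with
    | base => exact ⟨fun _ => θ₁, measurable_const, fun ω => hiter1 ω⟩
    | succ i hi ih =>
      obtain ⟨F, hFm, hFe⟩ := ih
      have hmemi : i ∈ Finset.Ico 1 (i + 1) := by simp [Finset.mem_Ico]; omega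
      have hsub : ∀ j : {j // j ∈ Finset.Ico 1 i}, (j.1 : ℕ) ∈ Finset.Ico 1 (i + 1) := by
        intro j
        have := j.2
        simp only [Finset.mem_Ico] at this ⊢
        omega
      have hq : Measurable fun (p : {j // j ∈ Finset.Ico 1 (i + 1)} → X) =>
          (fun j : {j // j ∈ Finset.Ico 1 i} => p ⟨j.1, hsub j⟩) :=
        measurable_pi_lambda _ fun j => measurable_pi_apply _
      refine ⟨fun p => F (fun j => p ⟨j.1, hsub j⟩)
          - (β / (ξ + (i : ℝ))) • g (p ⟨i, hmemi⟩, F (fun j => p ⟨j.1, hsub j⟩)), ?_, ?_⟩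
      · exact (hFm.comp hq).sub
          ((hgmeas.comp ((measurable_pi_apply _).prodMk (hFm.comp hq))).const_smul _)
      · intro ω
        rw [hiter ω i hi, hFe ω]
  -- one-step recursion for the expected loss
  have hrec : ∀ i : ℕ, 1 ≤ i →
      ∫ ω, L (θiter ω (i + 1)) ∂Pseq ≤
        (1 - β / (ξ + (i : ℝ)) * (c * mu)) * ∫ ω, L (θiter ω i) ∂Pseq
          + (β / (ξ + (i : ℝ))) ^ 2 * K * C_V * s / 2 := by
    intro i hi
    obtain ⟨F, hFm, hFe⟩ := hfac i hi
    set η := β / (ξ + (i : ℝ)) with hηdef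
    set A := fun ω : ℕ → X => θiter ω i with hAdef
    have hrestr : Measurable fun (ω : ℕ → X) (j : {j // j ∈ Finset.Ico 1 i}) => ω j.1 :=
      measurable_pi_lambda _ fun j => measurable_pi_apply _
    have hAeq : A = F ∘ (fun (ω : ℕ → X) (j : {j // j ∈ Finset.Ico 1 i}) => ω j.1) :=
      funext fun ω => hFe ω
    have hAm : Measurable A := by rw [hAeq]; exact hFm.comp hrestr
    have hBm : Measurable (fun ω : ℕ → X => ω i) := measurable_pi_apply i
    have hdisj : Disjoint (Finset.Ico 1 i) ({i} : Finset ℕ) := by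
      simp only [Finset.disjoint_singleton_right, Finset.mem_Ico]
      omega
    have hind0 := hiid.indepFun_finset (Finset.Ico 1 i) {i} hdisj
      (fun j => measurable_pi_apply j)
    have hind : IndepFun A (fun ω : ℕ → X => ω i) Pseq := by
      have h := hind0.comp hFm
        (measurable_pi_apply (⟨i, Finset.mem_singleton_self i⟩ : ({i} : Finset ℕ)))
      rw [hAeq]
      exact h
    set φ := fun p : E × X => L (p.1 - η • g (p.2, p.1)) with hφdef
    have hφm : Measurable φ :=
      (hLdiff.continuous.measurable).comp
        (measurable_fst.sub ((hgmeas.comp (measurable_snd.prodMk measurable_fst)).const_smul η))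
    have hpair : Measurable fun ω => (A ω, ω i) := hAm.prodMk hBm
    have hmapeq : Pseq.map (fun ω => (A ω, ω i)) = (Pseq.map A).prod P := by
      rw [(indepFun_iff_map_prod_eq_prod_map_map hAm.aemeasurable hBm.aemeasurable).mp hind,
        hmap i]
    haveI : IsProbabilityMeasure (Pseq.map A) := Measure.isProbabilityMeasure_map hAm.aemeasurable
    have hcomp : (fun ω => L (θiter ω (i + 1))) = fun ω => φ (A ω, ω i) :=
      funext fun ω => by rw [hiter ω i hi]
    have hIntφ : Integrable φ ((Pseq.map A).prod P) := by
      rw [← hmapeq, integrable_map_measure hφm.aestronglyMeasurable hpair.aemeasurable]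
      have heq : (φ ∘ fun ω => (A ω, ω i)) = fun ω => L (θiter ω (i + 1)) := by
        funext ω
        rw [Function.comp_apply, hiter ω i hi]
      rw [heq]
      exact hLint (i + 1)
    have hIm : StronglyMeasurable fun a : E => ∫ x, φ (a, x) ∂P :=
      hφm.stronglyMeasurable.integral_prod_right'
    have hE1 : ∫ ω, L (θiter ω (i + 1)) ∂Pseq = ∫ ω, (∫ x, φ (A ω, x) ∂P) ∂Pseq := by
      rw [hcomp, ← integral_map hpair.aemeasurable hφm.aestronglyMeasurable, hmapeq,
        integral_prod φ hIntφ, integral_map hAm.aemeasurable hIm.aestronglyMeasurable]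
    have hstep : ∀ ω : ℕ → X, ∫ x, φ (A ω, x) ∂P ≤
        (1 - η * (c * mu)) * L (A ω) + η ^ 2 * K * C_V * s / 2 := fun ω =>
      sgd_step_bound L hL0 hLdiff K hK hLip c hc hPL P g hgInt hgSqInt
        mu muG C_V M_V s hmu hmuG hCV hMV hs hmom1 hmom2 hvar
        η (hηpos i hi) (hηle i hi) (A ω)
    have hRint : Integrable (fun ω => (1 - η * (c * mu)) * L (A ω)
        + η ^ 2 * K * C_V * s / 2) Pseq := ((hLint i).const_mul _).add (integrable_const _)
    calc ∫ ω, L (θiter ω (i + 1)) ∂Pseq = ∫ ω, (∫ x, φ (A ω, x) ∂P) ∂Pseq := hE1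
      _ ≤ ∫ ω, ((1 - η * (c * mu)) * L (A ω) + η ^ 2 * K * C_V * s / 2) ∂Pseq :=
          integral_mono_of_nonneg
            (Filter.Eventually.of_forall fun ω => integral_nonneg fun x => hL0 _)
            hRint (Filter.Eventually.of_forall hstep)
      _ = (1 - η * (c * mu)) * ∫ ω, L (θiter ω i) ∂Pseq + η ^ 2 * K * C_V * s / 2 := by
          rw [integral_add ((hLint i).const_mul _) (integrable_const _),
            integral_const_mul, integral_const]
          simp
  -- the final induction
  set κ := max (β ^ 2 * K * C_V / (2 * (β * c * mu - 1))) ((ξ + 1) * L θ₁ / s) with hκdef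
  have hbcm' : β * c * mu = β * (c * mu) := by ring
  have hden : (0:ℝ) < 2 * (β * c * mu - 1) := by rw [hbcm']; linarith
  have hκ1 : β ^ 2 * K * C_V / (2 * (β * c * mu - 1)) ≤ κ := le_max_left _ _
  have hκ2 : (ξ + 1) * L θ₁ / s ≤ κ := le_max_right _ _
  have hκ0 : 0 ≤ κ :=
    le_trans (div_nonneg (mul_nonneg (by linarith) (hL0 θ₁)) hs'.le) hκ2
  have hQ : β ^ 2 * K * C_V ≤ κ * (2 * (β * c * mu - 1)) := by
    rw [div_le_iff₀ hden] at hκ1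
    linarith
  clear_value κ
  intro i hi
  induction i, hi using Nat.le_induction with
  | base =>
    have hbase : ∫ ω, L (θiter ω 1) ∂Pseq = L θ₁ := by
      rw [show (fun ω : ℕ → X => L (θiter ω 1)) = fun _ => L θ₁ from
        funext fun ω => by rw [hiter1 ω], integral_const]
      simp
    rw [hbase]
    rw [le_div_iff₀ (by push_cast; linarith : (0:ℝ) < ξ + ((1:ℕ):ℝ))]
    rw [div_le_iff₀ hs'] at hκ2
    push_cast
    nlinarith
  | succ i hi ih =>
    have hr := hrec i hi
    have hi1 : (1:ℝ) ≤ (i:ℝ) := by exact_mod_cast hi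
    have hηc := hηc1 i hi
    set t := ξ + (i : ℝ) with htdef
    have ht1 : 1 < t := by rw [htdef]; linarith
    have ht0 : 0 < t := by linarith
    rw [show ξ + ((i + 1 : ℕ) : ℝ) = t + 1 by rw [htdef]; push_cast; ring]
    clear_value t
    have hcoef : 0 ≤ 1 - β / t * (c * mu) := by linarith
    have hih : (1 - β / t * (c * mu)) * ∫ ω, L (θiter ω i) ∂Pseq
        ≤ (1 - β / t * (c * mu)) * (κ * s / t) := mul_le_mul_of_nonneg_left ih hcoef
    have hQ2 : β ^ 2 * K * C_V / 2 ≤ κ * (β * (c * mu) - 1) := by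
      rw [hbcm'] at hQ
      linarith
    calc ∫ ω, L (θiter ω (i + 1)) ∂Pseq
        ≤ (1 - β / t * (c * mu)) * ∫ ω, L (θiter ω i) ∂Pseq
          + (β / t) ^ 2 * K * C_V * s / 2 := hr
      _ ≤ (1 - β / t * (c * mu)) * (κ * s / t) + (β / t) ^ 2 * K * C_V * s / 2 := by
          linarith
      _ ≤ κ * s / (t + 1) :=
          sgd_frac_arith β (c * mu) K C_V κ s t hs' hκ0 ht1 hcoef hQ2
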